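/- arXiv:2004.03795 — 2 statements merged into one kernel-verified Lean document; each statement's English description precedes it below -/
import Mathlib

section
/- (Gibbs property of weak limits.) Assume hypothesis (H2). Fix λ ∈ ℝ and for each n ≥ 1 let μ_{n,λ} be the probability measure on X with density exp(λ S_n f)/Z_n(λ) with respect to σ. If (N_j) is a strictly increasing sequence of integers such that μ_{N_j,λ} converges weakly to a Borel probability measure μ, then there exists a constant C ≥ 1 such that for all n ≥ 1 and all x ∈ X, C^{−1} · exp(λ S_n f(x))/(q^n Z_n(λ)) ≤ μ([x_0,…,x_{n−1}]) ≤ C · exp(λ S_n f(x))/(q^n Z_n(λ)). Consequently any two weak limit points of (μ_{n,λ}) are equivalent measures. -/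
open MeasureTheory Filter Finset
open scoped ENNReal Topology

set_option linter.unusedSectionVars false
set_option maxHeartbeats 1000000
noncomputable section

/-- The shift map `T` on `ℕ → S`, `(Tx)_n = x_{n+1}`. -/
def shift {S : Type*} (x : ℕ → S) : ℕ → S := fun n => x (n + 1)

/-- The cylinder `[a_0, …, a_{m-1}]` of all `y` with `y_i = a_i` for `0 ≤ i < m`. -/
def cyl {S : Type*} {m : ℕ} (a : Fin m → S) : Set (ℕ → S) :=
  {y : ℕ → S | ∀ i : Fin m, y i = a i}

/-- The partial weighted Birkhoff sum `S_{m,n} f(x) = ∑_{k=m}^{n-1} f_k(T^k x)`. -/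
def birk {S : Type*} (f : ℕ → (ℕ → S) → ℝ) (m n : ℕ) (x : ℕ → S) : ℝ :=
  ∑ k ∈ Finset.Ico m n, f k (shift^[k] x)

/-- The partition function `Z_{m,n}(λ) = ∫ exp(λ S_{m,n}f) dσ`. -/
def Zmn {S : Type*} [MeasurableSpace S] (σ : Measure (ℕ → S))
    (f : ℕ → (ℕ → S) → ℝ) (lam : ℝ) (m n : ℕ) : ℝ :=
  ∫ x, Real.exp (lam * birk f m n x) ∂σ

/-- Hypothesis (H2): uniformly bounded distortion. -/
def H2 {S : Type*} (f : ℕ → (ℕ → S) → ℝ) (D : ℝ) : Prop :=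
  ∀ N : ℕ, 1 ≤ N → ∀ x y : ℕ → S, (∀ i, i < N → x i = y i) →
    ∑ k ∈ Finset.range N, |f k (shift^[k] x) - f k (shift^[k] y)| ≤ D

section Basic
variable {S : Type*}

lemma shift_iter_apply (k : ℕ) (x : ℕ → S) (j : ℕ) : shift^[k] x j = x (j + k) := by
  induction k generalizing x j with
  | zero => rfl
  | succ k ih =>
    rw [Function.iterate_succ_apply, ih]
    simp [shift, Nat.add_assoc, Nat.add_comm 1 k]

variable [TopologicalSpace S] [DiscreteTopology S]

lemma continuous_shift_iter (k : ℕ) : Continuous (shift^[k] : (ℕ → S) → ℕ → S) := by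
  refine continuous_pi fun j => ?_
  simp only [shift_iter_apply]
  exact continuous_apply _

lemma continuous_birk (f : ℕ → (ℕ → S) → ℝ) (hfc : ∀ n, Continuous (f n)) (m n : ℕ) :
    Continuous (birk f m n) :=
  continuous_finset_sum _ fun k _ => (hfc k).comp (continuous_shift_iter k)

lemma isClopen_cyl {m : ℕ} (a : Fin m → S) : IsClopen (cyl a) := by
  have : cyl a = ⋂ i : Fin m, (fun y : ℕ → S => y (i : ℕ)) ⁻¹' {a i} := by
    ext y; simp [cyl, Set.mem_iInter]
  rw [this]
  apply isClopen_iInter_of_finite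
  intro i
  exact ⟨(isClosed_discrete _).preimage (continuous_apply _),
    (isOpen_discrete _).preimage (continuous_apply _)⟩

variable [Finite S] [MeasurableSpace S] [BorelSpace S]

lemma measurableSet_cyl {m : ℕ} (a : Fin m → S) : MeasurableSet (cyl a) :=
  (isClopen_cyl a).isClosed.measurableSet

end Basic

section PiSystem
variable {S : Type*}

def cylSet (S : Type*) : Set (Set (ℕ → S)) := {t | ∃ (n : ℕ) (a : Fin n → S), t = cyl a}

lemma univ_mem_cylSet : Set.univ ∈ cylSet S :=
  ⟨0, (fun i => i.elim0), by ext y; simp [cyl]⟩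

lemma cyl_inter_cyl {n m : ℕ} (hnm : n ≤ m) (a : Fin n → S) (b : Fin m → S)
    (y : ℕ → S) (hya : y ∈ cyl a) (hyb : y ∈ cyl b) : cyl a ∩ cyl b = cyl b := by
  ext z
  simp only [Set.mem_inter_iff, and_iff_right_iff_imp]
  intro hz i
  have h1 : z (i : ℕ) = b ⟨(i : ℕ), lt_of_lt_of_le i.2 hnm⟩ := hz ⟨(i : ℕ), lt_of_lt_of_le i.2 hnm⟩
  have h2 : y (i : ℕ) = b ⟨(i : ℕ), lt_of_lt_of_le i.2 hnm⟩ := hyb ⟨(i : ℕ), lt_of_lt_of_le i.2 hnm⟩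
  rw [h1, ← h2, hya i]

lemma isPiSystem_cylSet : IsPiSystem (cylSet S) := by
  rintro s ⟨n, a, rfl⟩ t ⟨m, b, rfl⟩ hne
  obtain ⟨y, hya, hyb⟩ := hne
  rcases le_total n m with h | h
  · exact ⟨m, b, (cyl_inter_cyl h a b y hya hyb)⟩
  · rw [Set.inter_comm]
    exact ⟨n, a, (cyl_inter_cyl h b a y hyb hya)⟩

variable [Finite S] [TopologicalSpace S] [DiscreteTopology S] [MeasurableSpace S] [BorelSpace S]

lemma generateFrom_cylSet :
    (inferInstance : MeasurableSpace (ℕ → S)) = .generateFrom (cylSet S) := by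
  refine le_antisymm ?_ (MeasurableSpace.generateFrom_le ?_)
  · intro s hs
    have hev : ∀ i : ℕ, @Measurable _ _ (MeasurableSpace.generateFrom (cylSet S)) _
        (fun y : ℕ → S => y i) := by
      intro i t _
      have : (fun y : ℕ → S => y i) ⁻¹' t =
          ⋃ (a : Fin (i+1) → S) (_ : a (Fin.last i) ∈ t), cyl a := by
        ext y
        simp only [Set.mem_preimage, Set.mem_iUnion]
        constructor
        · intro hy
          refine ⟨fun j => y (j : ℕ), ?_, fun j => rfl⟩
          simpa [Fin.last] using hy
        · rintro ⟨a, hat, hcyl⟩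
          have := hcyl (Fin.last i)
          simp only [Fin.last] at this
          rw [this]; exact hat
      rw [this]
      exact .iUnion fun a => .iUnion fun h => .basic _ ⟨i+1, a, rfl⟩
    have : @Measurable _ _ (MeasurableSpace.generateFrom (cylSet S)) _
        (id : (ℕ → S) → (ℕ → S)) :=
      (@measurable_pi_iff (ℕ → S) ℕ (fun _ => S)
        (MeasurableSpace.generateFrom (cylSet S)) _ id).mpr hev
    exact this hs
  · rintro t ⟨n, a, rfl⟩
    exact measurableSet_cyl a

end PiSystem

section Glue
variable {S : Type*}

def glue {n m : ℕ} (b : Fin n → S) (a : Fin m → S) : Fin (n + m) → S :=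
  fun i => if h : (i : ℕ) < n then b ⟨i, h⟩ else a ⟨(i : ℕ) - n, by have := i.2; omega⟩

lemma mem_cyl_glue {n m : ℕ} (b : Fin n → S) (a : Fin m → S) (y : ℕ → S) :
    y ∈ cyl (glue b a) ↔ (∀ i : Fin n, y (i : ℕ) = b i) ∧ (∀ i : Fin m, y (n + i) = a i) := by
  constructor
  · intro h
    constructor
    · intro i
      have := h ⟨(i : ℕ), by omega⟩
      simpa [glue, i.2] using this
    · intro i
      have := h ⟨n + (i : ℕ), by omega⟩
      rw [this]
      simp only [glue]
      rw [dif_neg (by omega)]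
      congr 1
      ext
      simp
  · rintro ⟨h1, h2⟩ i
    by_cases hi : (i : ℕ) < n
    · rw [glue]; rw [dif_pos hi]; exact h1 ⟨(i : ℕ), hi⟩
    · rw [glue]; rw [dif_neg hi]
      have h3 := h2 ⟨(i : ℕ) - n, by have := i.2; omega⟩
      have : n + ((i : ℕ) - n) = (i : ℕ) := by omega
      rwa [this] at h3

lemma preimage_shift_cyl (n : ℕ) {m : ℕ} (a : Fin m → S) :
    (shift^[n] : (ℕ → S) → ℕ → S) ⁻¹' cyl a = ⋃ b : Fin n → S, cyl (glue b a) := by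
  ext y
  simp only [Set.mem_preimage, Set.mem_iUnion]
  constructor
  · intro hy
    refine ⟨fun i => y (i : ℕ), (mem_cyl_glue _ _ _).mpr ⟨fun i => rfl, fun i => ?_⟩⟩
    have := hy i
    rwa [shift_iter_apply, Nat.add_comm] at this
  · rintro ⟨b, hb⟩ i
    rw [shift_iter_apply, Nat.add_comm]
    exact ((mem_cyl_glue _ _ _).mp hb).2 i

lemma preimage_shift_inter (n : ℕ) {m : ℕ} (a : Fin m → S) (x : ℕ → S) :
    (shift^[n] : (ℕ → S) → ℕ → S) ⁻¹' cyl a ∩ cyl (fun i : Fin n => x (i : ℕ)) =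
      cyl (glue (fun i : Fin n => x (i : ℕ)) a) := by
  ext y
  rw [mem_cyl_glue]
  simp only [Set.mem_inter_iff, Set.mem_preimage]
  constructor
  · rintro ⟨h1, h2⟩
    refine ⟨h2, fun i => ?_⟩
    have := h1 i
    rwa [shift_iter_apply, Nat.add_comm] at this
  · rintro ⟨h1, h2⟩
    refine ⟨fun i => ?_, h1⟩
    rw [shift_iter_apply, Nat.add_comm]
    exact h2 i

lemma glue_disjoint {n m : ℕ} (a : Fin m → S) :
    Pairwise (Function.onFun Disjoint fun b : Fin n → S => cyl (glue b a)) := by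
  intro b b' hne
  rw [Function.onFun, Set.disjoint_left]
  intro y hy hy'
  exact hne (funext fun i => by
    rw [← ((mem_cyl_glue b a y).mp hy).1 i, ← ((mem_cyl_glue b' a y).mp hy').1 i])

end Glue

section MeasureLemmas
variable {S : Type*} [Fintype S] [TopologicalSpace S] [DiscreteTopology S]
  [MeasurableSpace S] [BorelSpace S]
  (σ : Measure (ℕ → S)) [IsProbabilityMeasure σ]

lemma card_pow_mul_inv_pow (h0 : Fintype.card S ≠ 0) (n m : ℕ) :
    (Fintype.card S : ℝ≥0∞) ^ n * ((Fintype.card S : ℝ≥0∞)⁻¹) ^ (n + m)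
      = ((Fintype.card S : ℝ≥0∞)⁻¹) ^ m := by
  rw [pow_add, ← mul_assoc, ← mul_pow,
    ENNReal.mul_inv_cancel (by exact_mod_cast h0) (by simp), one_pow, one_mul]

variable (hσ : ∀ (m : ℕ) (a : Fin m → S), σ (cyl a) = (Fintype.card S : ℝ≥0∞)⁻¹ ^ m)

include hσ

lemma sigma_preimage_shift (h0 : Fintype.card S ≠ 0) (n : ℕ) {m : ℕ} (a : Fin m → S) :
    σ ((shift^[n] : (ℕ → S) → ℕ → S) ⁻¹' cyl a) = (Fintype.card S : ℝ≥0∞)⁻¹ ^ m := by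
  rw [preimage_shift_cyl, measure_iUnion (glue_disjoint a) (fun b => measurableSet_cyl _)]
  simp only [hσ]
  rw [tsum_fintype]
  simp only [Finset.sum_const, Finset.card_univ, nsmul_eq_mul]
  rw [Fintype.card_fun, Fintype.card_fin, Nat.cast_pow]
  exact card_pow_mul_inv_pow h0 n m

lemma map_shift_eq (h0 : Fintype.card S ≠ 0) (n : ℕ) :
    Measure.map (shift^[n] : (ℕ → S) → ℕ → S) σ = σ := by
  have hm : Measurable (shift^[n] : (ℕ → S) → ℕ → S) := (continuous_shift_iter n).measurable
  haveI : IsProbabilityMeasure (Measure.map (shift^[n] : (ℕ → S) → ℕ → S) σ) :=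
    Measure.isProbabilityMeasure_map hm.aemeasurable
  refine ext_of_generate_finite (cylSet S) generateFrom_cylSet isPiSystem_cylSet ?_ (by simp)
  rintro s ⟨m, a, rfl⟩
  rw [Measure.map_apply hm (measurableSet_cyl a), sigma_preimage_shift σ hσ h0, hσ]

lemma map_restrict_eq (h0 : Fintype.card S ≠ 0) (n : ℕ) (x : ℕ → S) :
    Measure.map (shift^[n] : (ℕ → S) → ℕ → S) (σ.restrict (cyl fun i : Fin n => x (i : ℕ)))
      = ((Fintype.card S : ℝ≥0∞)⁻¹ ^ n) • σ := by
  have hm : Measurable (shift^[n] : (ℕ → S) → ℕ → S) := (continuous_shift_iter n).measurable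
  haveI : IsFiniteMeasure
      (Measure.map (shift^[n] : (ℕ → S) → ℕ → S) (σ.restrict (cyl fun i : Fin n => x (i : ℕ)))) :=
    Measure.isFiniteMeasure_map _ _
  refine ext_of_generate_finite (cylSet S) generateFrom_cylSet isPiSystem_cylSet ?_ ?_
  · rintro s ⟨m, a, rfl⟩
    rw [Measure.map_apply hm (measurableSet_cyl a),
      Measure.restrict_apply (hm (measurableSet_cyl a)), preimage_shift_inter, hσ,
      Measure.smul_apply, hσ, smul_eq_mul, ← pow_add]
  · rw [Measure.map_apply hm .univ, Set.preimage_univ, Measure.restrict_apply .univ,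
      Set.univ_inter, hσ, Measure.smul_apply, smul_eq_mul, measure_univ, mul_one]

lemma setIntegral_comp_shift (h0 : Fintype.card S ≠ 0) (n : ℕ) (x : ℕ → S)
    (G : (ℕ → S) → ℝ) (hG : Continuous G) :
    ∫ y in cyl (fun i : Fin n => x (i : ℕ)), G (shift^[n] y) ∂σ
      = ((Fintype.card S : ℝ)⁻¹) ^ n * ∫ y, G (shift^[n] y) ∂σ := by
  have hm : Measurable (shift^[n] : (ℕ → S) → ℕ → S) := (continuous_shift_iter n).measurable
  have h1 : ∫ y in cyl (fun i : Fin n => x (i : ℕ)), G (shift^[n] y) ∂σ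
      = ∫ z, G z ∂(Measure.map (shift^[n]) (σ.restrict (cyl fun i : Fin n => x (i : ℕ)))) :=
    (integral_map hm.aemeasurable hG.aestronglyMeasurable).symm
  have h2 : ∫ y, G (shift^[n] y) ∂σ = ∫ z, G z ∂σ := by
    conv_rhs => rw [← map_shift_eq σ hσ h0 n]
    exact (integral_map hm.aemeasurable hG.aestronglyMeasurable).symm
  rw [h1, map_restrict_eq σ hσ h0 n x, integral_smul_measure, h2]
  simp [ENNReal.toReal_pow, smul_eq_mul]

end MeasureLemmas

section Analysis
variable {S : Type*} [Fintype S] [TopologicalSpace S] [DiscreteTopology S]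
  [MeasurableSpace S] [BorelSpace S]
  {f : ℕ → (ℕ → S) → ℝ} (hfc : ∀ n, Continuous (f n))
  {M : ℝ} (hfb : ∀ n x, |f n x| ≤ M) {D : ℝ} (hH2 : H2 f D) (lam : ℝ)

include hfc in
lemma continuous_expBirk (m n : ℕ) :
    Continuous fun y : ℕ → S => Real.exp (lam * birk f m n y) :=
  Real.continuous_exp.comp (continuous_const.mul (continuous_birk f hfc m n))

include hfb in
lemma abs_birk_le (m n : ℕ) (y : ℕ → S) :
    |birk f m n y| ≤ (Finset.Ico m n).card * M := by
  calc |birk f m n y| ≤ ∑ k ∈ Finset.Ico m n, |f k (shift^[k] y)| :=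
        Finset.abs_sum_le_sum_abs _ _
    _ ≤ (Finset.Ico m n).card * M := by
        rw [← nsmul_eq_mul]
        exact Finset.sum_le_card_nsmul _ _ _ fun k _ => hfb k _

include hfb in
lemma expBirk_le (m n : ℕ) (y : ℕ → S) :
    Real.exp (lam * birk f m n y) ≤ Real.exp (|lam| * ((Finset.Ico m n).card * M)) := by
  apply Real.exp_le_exp.mpr
  calc lam * birk f m n y ≤ |lam * birk f m n y| := le_abs_self _
    _ = |lam| * |birk f m n y| := abs_mul _ _
    _ ≤ |lam| * ((Finset.Ico m n).card * M) :=
        mul_le_mul_of_nonneg_left (abs_birk_le hfb m n y) (abs_nonneg _)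

include hfc hfb in
lemma integrable_expBirk (m n : ℕ) (μ : Measure (ℕ → S)) [IsFiniteMeasure μ] :
    Integrable (fun y => Real.exp (lam * birk f m n y)) μ := by
  refine (integrable_const (Real.exp (|lam| * ((Finset.Ico m n).card * M)))).mono'
    (continuous_expBirk hfc lam m n).aestronglyMeasurable (ae_of_all _ fun y => ?_)
  rw [Real.norm_eq_abs, abs_of_pos (Real.exp_pos _)]
  exact expBirk_le hfb lam m n y

include hfc hfb in
lemma Zmn_pos (σ : Measure (ℕ → S)) [IsProbabilityMeasure σ] (m n : ℕ) :
    0 < Zmn σ f lam m n := by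
  have h1 : Real.exp (-(|lam| * ((Finset.Ico m n).card * M))) ≤ Zmn σ f lam m n := by
    have : ∫ _ : ℕ → S, Real.exp (-(|lam| * ((Finset.Ico m n).card * M))) ∂σ
        = Real.exp (-(|lam| * ((Finset.Ico m n).card * M))) := by simp
    rw [← this]
    refine integral_mono (integrable_const _) (integrable_expBirk hfc hfb lam m n σ) fun y => ?_
    apply Real.exp_le_exp.mpr
    have := abs_le.mp (abs_birk_le hfb (f := f) m n y)
    nlinarith [abs_le.mp (le_refl |lam|) , le_abs_self lam, neg_abs_le lam,
      abs_nonneg lam, abs_le.mp (abs_birk_le hfb (f := f) m n y)]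
  exact lt_of_lt_of_le (Real.exp_pos _) h1

include hH2 in
lemma birk_close {n : ℕ} (hn : 1 ≤ n) (x y : ℕ → S)
    (hy : y ∈ cyl (fun i : Fin n => x (i : ℕ))) : |birk f 0 n y - birk f 0 n x| ≤ D := by
  have hxy : ∀ i, i < n → y i = x i := fun i hi => hy ⟨i, hi⟩
  calc |birk f 0 n y - birk f 0 n x|
      = |∑ k ∈ Finset.range n, (f k (shift^[k] y) - f k (shift^[k] x))| := by
        rw [birk, birk, ← Finset.sum_sub_distrib, Finset.range_eq_Ico]
    _ ≤ ∑ k ∈ Finset.range n, |f k (shift^[k] y) - f k (shift^[k] x)| :=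
        Finset.abs_sum_le_sum_abs _ _
    _ ≤ D := hH2 n hn y x hxy

include hH2 in
lemma expBirk_head_le {n : ℕ} (hn : 1 ≤ n) (x y : ℕ → S)
    (hy : y ∈ cyl (fun i : Fin n => x (i : ℕ))) :
    Real.exp (lam * birk f 0 n y)
      ≤ Real.exp (|lam| * D) * Real.exp (lam * birk f 0 n x) := by
  rw [← Real.exp_add]
  apply Real.exp_le_exp.mpr
  have h := birk_close hH2 hn x y hy
  have : lam * birk f 0 n y - lam * birk f 0 n x ≤ |lam| * D := by
    calc lam * birk f 0 n y - lam * birk f 0 n x = lam * (birk f 0 n y - birk f 0 n x) := by ring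
      _ ≤ |lam * (birk f 0 n y - birk f 0 n x)| := le_abs_self _
      _ = |lam| * |birk f 0 n y - birk f 0 n x| := abs_mul _ _
      _ ≤ |lam| * D := by
          apply mul_le_mul_of_nonneg_left h (abs_nonneg _)
  linarith

end Analysis

section Core
variable {S : Type*} [Fintype S] [TopologicalSpace S] [DiscreteTopology S]
  [MeasurableSpace S] [BorelSpace S]
  (σ : Measure (ℕ → S)) [IsProbabilityMeasure σ]
  (hσ : ∀ (m : ℕ) (a : Fin m → S), σ (cyl a) = (Fintype.card S : ℝ≥0∞)⁻¹ ^ m)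
  {f : ℕ → (ℕ → S) → ℝ} (hfc : ∀ n, Continuous (f n))
  {M : ℝ} (hfb : ∀ n x, |f n x| ≤ M) {D : ℝ} (hH2 : H2 f D) (lam : ℝ)

lemma birk_split {n m : ℕ} (hnm : n ≤ m) (y : ℕ → S) :
    birk f 0 m y = birk f 0 n y + birk f n m y :=
  (Finset.sum_Ico_consecutive _ (Nat.zero_le n) hnm).symm

lemma birk_tail_comp (n m : ℕ) (y : ℕ → S) :
    birk f n m y = ∑ k ∈ Finset.Ico n m, f k (shift^[k - n] (shift^[n] y)) := by
  refine Finset.sum_congr rfl fun k hk => ?_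
  rw [← Function.iterate_add_apply]
  congr 2
  have := (Finset.mem_Ico.mp hk).1
  omega

include hfc in
lemma continuous_tailG (n m : ℕ) :
    Continuous fun z : ℕ → S => Real.exp (lam * ∑ k ∈ Finset.Ico n m, f k (shift^[k - n] z)) :=
  Real.continuous_exp.comp (continuous_const.mul
    (continuous_finset_sum _ fun k _ => (hfc k).comp (continuous_shift_iter _)))

include hσ hfc in
lemma setIntegral_tail (h0 : Fintype.card S ≠ 0) (n m : ℕ) (x : ℕ → S) :
    ∫ y in cyl (fun i : Fin n => x (i : ℕ)), Real.exp (lam * birk f n m y) ∂σ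
      = ((Fintype.card S : ℝ)⁻¹) ^ n * Zmn σ f lam n m := by
  have hcongr : ∀ y : ℕ → S, Real.exp (lam * birk f n m y)
      = (fun z => Real.exp (lam * ∑ k ∈ Finset.Ico n m, f k (shift^[k - n] z))) (shift^[n] y) :=
    fun y => by rw [birk_tail_comp]
  calc ∫ y in cyl (fun i : Fin n => x (i : ℕ)), Real.exp (lam * birk f n m y) ∂σ
      = ∫ y in cyl (fun i : Fin n => x (i : ℕ)),
          (fun z => Real.exp (lam * ∑ k ∈ Finset.Ico n m, f k (shift^[k - n] z)))
            (shift^[n] y) ∂σ := by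
        exact integral_congr_ae (ae_of_all _ fun y => hcongr y)
    _ = ((Fintype.card S : ℝ)⁻¹) ^ n * ∫ y,
          (fun z => Real.exp (lam * ∑ k ∈ Finset.Ico n m, f k (shift^[k - n] z)))
            (shift^[n] y) ∂σ :=
        setIntegral_comp_shift σ hσ h0 n x _ (continuous_tailG hfc lam n m)
    _ = ((Fintype.card S : ℝ)⁻¹) ^ n * Zmn σ f lam n m := by
        congr 1
        refine integral_congr_ae (ae_of_all _ fun y => ?_)
        exact (hcongr y).symm

end Core

section Core2
variable {S : Type*} [Fintype S] [TopologicalSpace S] [DiscreteTopology S]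
  [MeasurableSpace S] [BorelSpace S]
  (σ : Measure (ℕ → S)) [IsProbabilityMeasure σ]
  (hσ : ∀ (m : ℕ) (a : Fin m → S), σ (cyl a) = (Fintype.card S : ℝ≥0∞)⁻¹ ^ m)
  {f : ℕ → (ℕ → S) → ℝ} (hfc : ∀ n, Continuous (f n))
  {M : ℝ} (hfb : ∀ n x, |f n x| ≤ M) {D : ℝ} (hH2 : H2 f D) (lam : ℝ)

include hH2 in
lemma expBirk_head_le' {n : ℕ} (hn : 1 ≤ n) (x y : ℕ → S)
    (hy : y ∈ cyl (fun i : Fin n => x (i : ℕ))) :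
    Real.exp (lam * birk f 0 n x)
      ≤ Real.exp (|lam| * D) * Real.exp (lam * birk f 0 n y) := by
  rw [← Real.exp_add]
  apply Real.exp_le_exp.mpr
  have h := birk_close hH2 hn x y hy
  have h2 : lam * birk f 0 n x - lam * birk f 0 n y ≤ |lam| * D := by
    calc lam * birk f 0 n x - lam * birk f 0 n y = -(lam * (birk f 0 n y - birk f 0 n x)) := by ring
      _ ≤ |lam * (birk f 0 n y - birk f 0 n x)| := neg_le_abs _
      _ = |lam| * |birk f 0 n y - birk f 0 n x| := abs_mul _ _
      _ ≤ |lam| * D := mul_le_mul_of_nonneg_left h (abs_nonneg _)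
  linarith

include hσ hfc hfb hH2 in
lemma setIntegral_head_le (h0 : Fintype.card S ≠ 0) {n m : ℕ} (hn : 1 ≤ n) (hnm : n ≤ m)
    (x : ℕ → S) :
    ∫ y in cyl (fun i : Fin n => x (i : ℕ)), Real.exp (lam * birk f 0 m y) ∂σ
      ≤ Real.exp (|lam| * D) * Real.exp (lam * birk f 0 n x)
        * (((Fintype.card S : ℝ)⁻¹) ^ n * Zmn σ f lam n m) := by
  have step : ∫ y in cyl (fun i : Fin n => x (i : ℕ)), Real.exp (lam * birk f 0 m y) ∂σ
      ≤ ∫ y in cyl (fun i : Fin n => x (i : ℕ)),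
          (Real.exp (|lam| * D) * Real.exp (lam * birk f 0 n x))
            * Real.exp (lam * birk f n m y) ∂σ := by
    refine setIntegral_mono_on (integrable_expBirk hfc hfb lam 0 m σ).integrableOn
      (((integrable_expBirk hfc hfb lam n m σ).const_mul _).integrableOn)
      (measurableSet_cyl _) fun y hy => ?_
    rw [birk_split hnm, mul_add, Real.exp_add]
    exact mul_le_mul_of_nonneg_right (expBirk_head_le hH2 lam hn x y hy) (Real.exp_pos _).le
  rw [integral_const_mul, setIntegral_tail σ hσ hfc lam h0 n m x] at step
  linarith [step]

include hσ hfc hfb hH2 in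
lemma setIntegral_head_ge (h0 : Fintype.card S ≠ 0) {n m : ℕ} (hn : 1 ≤ n) (hnm : n ≤ m)
    (x : ℕ → S) :
    Real.exp (-(|lam| * D)) * Real.exp (lam * birk f 0 n x)
        * (((Fintype.card S : ℝ)⁻¹) ^ n * Zmn σ f lam n m)
      ≤ ∫ y in cyl (fun i : Fin n => x (i : ℕ)), Real.exp (lam * birk f 0 m y) ∂σ := by
  have step : ∫ y in cyl (fun i : Fin n => x (i : ℕ)),
        (Real.exp (-(|lam| * D)) * Real.exp (lam * birk f 0 n x))
          * Real.exp (lam * birk f n m y) ∂σ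
      ≤ ∫ y in cyl (fun i : Fin n => x (i : ℕ)), Real.exp (lam * birk f 0 m y) ∂σ := by
    refine setIntegral_mono_on
      (((integrable_expBirk hfc hfb lam n m σ).const_mul _).integrableOn)
      (integrable_expBirk hfc hfb lam 0 m σ).integrableOn
      (measurableSet_cyl _) fun y hy => ?_
    rw [birk_split hnm, mul_add, Real.exp_add]
    refine mul_le_mul_of_nonneg_right ?_ (Real.exp_pos _).le
    have h := expBirk_head_le' hH2 lam hn x y hy
    rw [Real.exp_neg]
    rw [inv_mul_le_iff₀ (Real.exp_pos _)] at *
    linarith [h]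
  rw [integral_const_mul, setIntegral_tail σ hσ hfc lam h0 n m x] at step
  linarith [step]

end Core2

section Core3
variable {S : Type*} [Fintype S] [TopologicalSpace S] [DiscreteTopology S]
  [MeasurableSpace S] [BorelSpace S]
  (σ : Measure (ℕ → S)) [IsProbabilityMeasure σ]
  (hσ : ∀ (m : ℕ) (a : Fin m → S), σ (cyl a) = (Fintype.card S : ℝ≥0∞)⁻¹ ^ m)
  {f : ℕ → (ℕ → S) → ℝ} (hfc : ∀ n, Continuous (f n))
  {M : ℝ} (hfb : ∀ n x, |f n x| ≤ M) {D : ℝ} (hH2 : H2 f D) (lam : ℝ)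

lemma pairwise_disjoint_cyl (n : ℕ) :
    Pairwise (Function.onFun Disjoint fun a : Fin n → S => cyl a) := by
  intro a a' hne
  rw [Function.onFun, Set.disjoint_left]
  intro y hy hy'
  exact hne (funext fun i => by rw [← hy i, ← hy' i])

lemma iUnion_cyl (n : ℕ) : (⋃ a : Fin n → S, cyl a) = Set.univ := by
  refine Set.eq_univ_of_forall fun y => Set.mem_iUnion.mpr ⟨fun i => y (i : ℕ), fun i => rfl⟩

lemma integral_eq_sum_cyl (n : ℕ) (g : (ℕ → S) → ℝ) (hg : Integrable g σ) :
    ∫ y, g y ∂σ = ∑ a : Fin n → S, ∫ y in cyl a, g y ∂σ := by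
  rw [← setIntegral_univ, ← iUnion_cyl n]
  exact integral_iUnion_fintype (fun a => measurableSet_cyl a) (pairwise_disjoint_cyl n)
    (fun a => hg.integrableOn)

variable [Nonempty S]

def extpt {n : ℕ} (a : Fin n → S) : ℕ → S :=
  fun j => if h : j < n then a ⟨j, h⟩ else Classical.arbitrary S

lemma extpt_spec {n : ℕ} (a : Fin n → S) : (fun i : Fin n => extpt a (i : ℕ)) = a :=
  funext fun i => by simp [extpt, i.2]

lemma cyl_extpt {n : ℕ} (a : Fin n → S) : cyl a = cyl (fun i : Fin n => extpt a (i : ℕ)) := by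
  rw [extpt_spec]

include hσ in
lemma sigma_cyl_toReal {n : ℕ} (a : Fin n → S) :
    (σ (cyl a)).toReal = ((Fintype.card S : ℝ)⁻¹) ^ n := by
  rw [hσ]
  simp [ENNReal.toReal_pow, ENNReal.toReal_inv]

include hσ hfc hfb hH2 in
lemma head_sum_le (h0 : Fintype.card S ≠ 0) {n : ℕ} (hn : 1 ≤ n) :
    ∑ a : Fin n → S, Real.exp (lam * birk f 0 n (extpt a)) * ((Fintype.card S : ℝ)⁻¹) ^ n
      ≤ Real.exp (|lam| * D) * Zmn σ f lam 0 n := by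
  have key : ∀ a : Fin n → S,
      Real.exp (lam * birk f 0 n (extpt a)) * ((Fintype.card S : ℝ)⁻¹) ^ n
        ≤ Real.exp (|lam| * D) * ∫ y in cyl a, Real.exp (lam * birk f 0 n y) ∂σ := by
    intro a
    have hconst : ∫ _ in cyl a, Real.exp (lam * birk f 0 n (extpt a)) ∂σ
        = Real.exp (lam * birk f 0 n (extpt a)) * ((Fintype.card S : ℝ)⁻¹) ^ n := by
      rw [setIntegral_const, measureReal_def, sigma_cyl_toReal σ hσ, smul_eq_mul, mul_comm]
    have hmono : ∫ _ in cyl a, Real.exp (lam * birk f 0 n (extpt a)) ∂σ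
        ≤ ∫ y in cyl a, Real.exp (|lam| * D) * Real.exp (lam * birk f 0 n y) ∂σ := by
      refine setIntegral_mono_on (integrableOn_const (measure_lt_top _ _).ne)
        ((integrable_expBirk hfc hfb lam 0 n σ).const_mul _).integrableOn
        (measurableSet_cyl _) fun y hy => ?_
      rw [cyl_extpt] at hy
      exact expBirk_head_le' hH2 lam hn (extpt a) y hy
    rw [hconst, integral_const_mul] at hmono
    exact hmono
  calc ∑ a : Fin n → S, Real.exp (lam * birk f 0 n (extpt a)) * ((Fintype.card S : ℝ)⁻¹) ^ n
      ≤ ∑ a : Fin n → S, Real.exp (|lam| * D) * ∫ y in cyl a, Real.exp (lam * birk f 0 n y) ∂σ :=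
        Finset.sum_le_sum fun a _ => key a
    _ = Real.exp (|lam| * D) * Zmn σ f lam 0 n := by
        rw [← Finset.mul_sum, Zmn,
          integral_eq_sum_cyl σ n _ (integrable_expBirk hfc hfb lam 0 n σ)]

include hσ hfc hfb hH2 in
lemma head_sum_ge (h0 : Fintype.card S ≠ 0) {n : ℕ} (hn : 1 ≤ n) :
    Real.exp (-(|lam| * D)) * Zmn σ f lam 0 n
      ≤ ∑ a : Fin n → S, Real.exp (lam * birk f 0 n (extpt a)) * ((Fintype.card S : ℝ)⁻¹) ^ n := by
  have key : ∀ a : Fin n → S,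
      Real.exp (-(|lam| * D)) * ∫ y in cyl a, Real.exp (lam * birk f 0 n y) ∂σ
        ≤ Real.exp (lam * birk f 0 n (extpt a)) * ((Fintype.card S : ℝ)⁻¹) ^ n := by
    intro a
    have hconst : ∫ _ in cyl a, Real.exp (lam * birk f 0 n (extpt a)) ∂σ
        = Real.exp (lam * birk f 0 n (extpt a)) * ((Fintype.card S : ℝ)⁻¹) ^ n := by
      rw [setIntegral_const, measureReal_def, sigma_cyl_toReal σ hσ, smul_eq_mul, mul_comm]
    have hmono : ∫ y in cyl a, Real.exp (-(|lam| * D)) * Real.exp (lam * birk f 0 n y) ∂σ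
        ≤ ∫ _ in cyl a, Real.exp (lam * birk f 0 n (extpt a)) ∂σ := by
      refine setIntegral_mono_on
        ((integrable_expBirk hfc hfb lam 0 n σ).const_mul _).integrableOn
        (integrableOn_const (measure_lt_top _ _).ne)
        (measurableSet_cyl _) fun y hy => ?_
      rw [cyl_extpt] at hy
      have h := expBirk_head_le hH2 lam hn (extpt a) y hy
      rw [Real.exp_neg, inv_mul_le_iff₀ (Real.exp_pos _)]
      linarith [h]
    rw [hconst, integral_const_mul] at hmono
    exact hmono
  calc Real.exp (-(|lam| * D)) * Zmn σ f lam 0 n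
      = ∑ a : Fin n → S, Real.exp (-(|lam| * D))
          * ∫ y in cyl a, Real.exp (lam * birk f 0 n y) ∂σ := by
        rw [← Finset.mul_sum, Zmn,
          integral_eq_sum_cyl σ n _ (integrable_expBirk hfc hfb lam 0 n σ)]
    _ ≤ _ := Finset.sum_le_sum fun a _ => key a

end Core3

section Core4
variable {S : Type*} [Fintype S] [TopologicalSpace S] [DiscreteTopology S]
  [MeasurableSpace S] [BorelSpace S] [Nonempty S]
  (σ : Measure (ℕ → S)) [IsProbabilityMeasure σ]
  (hσ : ∀ (m : ℕ) (a : Fin m → S), σ (cyl a) = (Fintype.card S : ℝ≥0∞)⁻¹ ^ m)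
  {f : ℕ → (ℕ → S) → ℝ} (hfc : ∀ n, Continuous (f n))
  {M : ℝ} (hfb : ∀ n x, |f n x| ≤ M) {D : ℝ} (hH2 : H2 f D) (lam : ℝ)

include hσ hfc hfb hH2 in
lemma Zm_le (h0 : Fintype.card S ≠ 0) {n m : ℕ} (hn : 1 ≤ n) (hnm : n ≤ m) :
    Zmn σ f lam 0 m ≤ Real.exp (|lam| * D) * Real.exp (|lam| * D)
      * Zmn σ f lam 0 n * Zmn σ f lam n m := by
  have hZnm : 0 < Zmn σ f lam n m := Zmn_pos hfc hfb lam σ n m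
  have step1 : Zmn σ f lam 0 m
      ≤ ∑ a : Fin n → S, (Real.exp (lam * birk f 0 n (extpt a)) * ((Fintype.card S : ℝ)⁻¹) ^ n)
          * (Real.exp (|lam| * D) * Zmn σ f lam n m) := by
    rw [Zmn, integral_eq_sum_cyl σ n _ (integrable_expBirk hfc hfb lam 0 m σ)]
    refine Finset.sum_le_sum fun a _ => ?_
    have h := setIntegral_head_le σ hσ hfc hfb hH2 lam h0 hn hnm (extpt a)
    rw [← cyl_extpt] at h
    calc ∫ y in cyl a, Real.exp (lam * birk f 0 m y) ∂σ
        ≤ Real.exp (|lam| * D) * Real.exp (lam * birk f 0 n (extpt a))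
            * (((Fintype.card S : ℝ)⁻¹) ^ n * Zmn σ f lam n m) := h
      _ = (Real.exp (lam * birk f 0 n (extpt a)) * ((Fintype.card S : ℝ)⁻¹) ^ n)
            * (Real.exp (|lam| * D) * Zmn σ f lam n m) := by ring
  rw [← Finset.sum_mul] at step1
  calc Zmn σ f lam 0 m
      ≤ (∑ a : Fin n → S, Real.exp (lam * birk f 0 n (extpt a)) * ((Fintype.card S : ℝ)⁻¹) ^ n)
          * (Real.exp (|lam| * D) * Zmn σ f lam n m) := step1
    _ ≤ (Real.exp (|lam| * D) * Zmn σ f lam 0 n)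
          * (Real.exp (|lam| * D) * Zmn σ f lam n m) := by
        refine mul_le_mul_of_nonneg_right (head_sum_le σ hσ hfc hfb hH2 lam h0 hn) ?_
        positivity
    _ = Real.exp (|lam| * D) * Real.exp (|lam| * D) * Zmn σ f lam 0 n * Zmn σ f lam n m := by
        ring

include hσ hfc hfb hH2 in
lemma Zm_ge (h0 : Fintype.card S ≠ 0) {n m : ℕ} (hn : 1 ≤ n) (hnm : n ≤ m) :
    Real.exp (-(|lam| * D)) * Real.exp (-(|lam| * D))
      * Zmn σ f lam 0 n * Zmn σ f lam n m ≤ Zmn σ f lam 0 m := by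
  have hZnm : 0 < Zmn σ f lam n m := Zmn_pos hfc hfb lam σ n m
  have step1 : ∑ a : Fin n → S,
        (Real.exp (lam * birk f 0 n (extpt a)) * ((Fintype.card S : ℝ)⁻¹) ^ n)
          * (Real.exp (-(|lam| * D)) * Zmn σ f lam n m)
      ≤ Zmn σ f lam 0 m := by
    have hZ : Zmn σ f lam 0 m
        = ∑ a : Fin n → S, ∫ y in cyl a, Real.exp (lam * birk f 0 m y) ∂σ :=
      integral_eq_sum_cyl σ n _ (integrable_expBirk hfc hfb lam 0 m σ)
    rw [hZ]
    refine Finset.sum_le_sum fun a _ => ?_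
    have h := setIntegral_head_ge σ hσ hfc hfb hH2 lam h0 hn hnm (extpt a)
    rw [← cyl_extpt] at h
    calc (Real.exp (lam * birk f 0 n (extpt a)) * ((Fintype.card S : ℝ)⁻¹) ^ n)
          * (Real.exp (-(|lam| * D)) * Zmn σ f lam n m)
        = Real.exp (-(|lam| * D)) * Real.exp (lam * birk f 0 n (extpt a))
            * (((Fintype.card S : ℝ)⁻¹) ^ n * Zmn σ f lam n m) := by ring
      _ ≤ _ := h
  rw [← Finset.sum_mul] at step1
  calc Real.exp (-(|lam| * D)) * Real.exp (-(|lam| * D)) * Zmn σ f lam 0 n * Zmn σ f lam n m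
      = (Real.exp (-(|lam| * D)) * Zmn σ f lam 0 n)
          * (Real.exp (-(|lam| * D)) * Zmn σ f lam n m) := by ring
    _ ≤ (∑ a : Fin n → S, Real.exp (lam * birk f 0 n (extpt a)) * ((Fintype.card S : ℝ)⁻¹) ^ n)
          * (Real.exp (-(|lam| * D)) * Zmn σ f lam n m) := by
        refine mul_le_mul_of_nonneg_right (head_sum_ge σ hσ hfc hfb hH2 lam h0 hn) ?_
        positivity
    _ ≤ Zmn σ f lam 0 m := step1

end Core4

section Core5
variable {S : Type*} [Fintype S] [TopologicalSpace S] [DiscreteTopology S]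
  [MeasurableSpace S] [BorelSpace S] [Nonempty S]
  (σ : Measure (ℕ → S)) [IsProbabilityMeasure σ]
  (hσ : ∀ (m : ℕ) (a : Fin m → S), σ (cyl a) = (Fintype.card S : ℝ≥0∞)⁻¹ ^ m)
  {f : ℕ → (ℕ → S) → ℝ} (hfc : ∀ n, Continuous (f n))
  {M : ℝ} (hfb : ∀ n x, |f n x| ≤ M) {D : ℝ} (hH2 : H2 f D) (lam : ℝ)

include hfc hfb in
lemma nu_cyl_toReal (m : ℕ) {n : ℕ} (a : Fin n → S) :
    ((σ.withDensity fun y =>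
        ENNReal.ofReal (Real.exp (lam * birk f 0 m y) / Zmn σ f lam 0 m)) (cyl a)).toReal
      = (∫ y in cyl a, Real.exp (lam * birk f 0 m y) ∂σ) / Zmn σ f lam 0 m := by
  rw [withDensity_apply _ (measurableSet_cyl _)]
  rw [← ofReal_integral_eq_lintegral_ofReal
    (((integrable_expBirk hfc hfb lam 0 m σ).div_const _).restrict)
    (ae_of_all _ fun y => div_nonneg (Real.exp_pos _).le (Zmn_pos hfc hfb lam σ 0 m).le)]
  rw [ENNReal.toReal_ofReal (setIntegral_nonneg (measurableSet_cyl _)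
    (fun y _ => div_nonneg (Real.exp_pos _).le (Zmn_pos hfc hfb lam σ 0 m).le))]
  rw [integral_div]

include hσ hfc hfb hH2 in
lemma nu_cyl_le (h0 : Fintype.card S ≠ 0) {n m : ℕ} (hn : 1 ≤ n) (hnm : n ≤ m) (x : ℕ → S) :
    ((σ.withDensity fun y =>
        ENNReal.ofReal (Real.exp (lam * birk f 0 m y) / Zmn σ f lam 0 m))
          (cyl fun i : Fin n => x (i : ℕ))).toReal
      ≤ Real.exp (3 * (|lam| * D))
          * (Real.exp (lam * birk f 0 n x) / ((Fintype.card S : ℝ) ^ n * Zmn σ f lam 0 n)) := by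
  have hq : (0 : ℝ) < (Fintype.card S : ℝ) := by
    exact_mod_cast Nat.pos_of_ne_zero h0
  have hqn : (0 : ℝ) < (Fintype.card S : ℝ) ^ n := pow_pos hq n
  have hqq : ((Fintype.card S : ℝ)⁻¹) ^ n * (Fintype.card S : ℝ) ^ n = 1 := by
    rw [← mul_pow, inv_mul_cancel₀ hq.ne', one_pow]
  have hZn : 0 < Zmn σ f lam 0 n := Zmn_pos hfc hfb lam σ 0 n
  have hZm : 0 < Zmn σ f lam 0 m := Zmn_pos hfc hfb lam σ 0 m
  have hZnm : 0 < Zmn σ f lam n m := Zmn_pos hfc hfb lam σ n m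
  have hEn : 0 < Real.exp (lam * birk f 0 n x) := Real.exp_pos _
  rw [nu_cyl_toReal σ hfc hfb lam m _]
  have h1 := setIntegral_head_le σ hσ hfc hfb hH2 lam h0 hn hnm x
  have h2 := Zm_ge σ hσ hfc hfb hH2 lam h0 hn hnm
  have hZZ : Zmn σ f lam 0 n * Zmn σ f lam n m
      ≤ Real.exp (|lam| * D) * Real.exp (|lam| * D) * Zmn σ f lam 0 m := by
    have hee : Real.exp (|lam| * D) * Real.exp (-(|lam| * D)) = 1 := by
      rw [← Real.exp_add]; simp
    calc Zmn σ f lam 0 n * Zmn σ f lam n m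
        = (Real.exp (|lam| * D) * Real.exp (-(|lam| * D)))
            * (Real.exp (|lam| * D) * Real.exp (-(|lam| * D)))
            * Zmn σ f lam 0 n * Zmn σ f lam n m := by rw [hee]; ring
      _ = (Real.exp (|lam| * D) * Real.exp (|lam| * D))
            * (Real.exp (-(|lam| * D)) * Real.exp (-(|lam| * D))
              * Zmn σ f lam 0 n * Zmn σ f lam n m) := by ring
      _ ≤ (Real.exp (|lam| * D) * Real.exp (|lam| * D)) * Zmn σ f lam 0 m :=
          mul_le_mul_of_nonneg_left h2 (by positivity)
      _ = Real.exp (|lam| * D) * Real.exp (|lam| * D) * Zmn σ f lam 0 m := by ring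
  rw [div_le_iff₀ hZm,
    show Real.exp (3 * (|lam| * D))
        * (Real.exp (lam * birk f 0 n x) / ((Fintype.card S : ℝ) ^ n * Zmn σ f lam 0 n))
        * Zmn σ f lam 0 m
      = (Real.exp (3 * (|lam| * D)) * Real.exp (lam * birk f 0 n x) * Zmn σ f lam 0 m)
        / ((Fintype.card S : ℝ) ^ n * Zmn σ f lam 0 n) from by ring,
    le_div_iff₀ (mul_pos hqn hZn)]
  have he3 : Real.exp (3 * (|lam| * D))
      = Real.exp (|lam| * D) * (Real.exp (|lam| * D) * Real.exp (|lam| * D)) := by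
    rw [← Real.exp_add, ← Real.exp_add]; ring_nf
  calc (∫ y in cyl fun i : Fin n => x (i : ℕ), Real.exp (lam * birk f 0 m y) ∂σ)
        * ((Fintype.card S : ℝ) ^ n * Zmn σ f lam 0 n)
      ≤ (Real.exp (|lam| * D) * Real.exp (lam * birk f 0 n x)
          * (((Fintype.card S : ℝ)⁻¹) ^ n * Zmn σ f lam n m))
          * ((Fintype.card S : ℝ) ^ n * Zmn σ f lam 0 n) :=
        mul_le_mul_of_nonneg_right h1 (by positivity)
    _ = Real.exp (|lam| * D) * Real.exp (lam * birk f 0 n x)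
          * (Zmn σ f lam 0 n * Zmn σ f lam n m)
          * (((Fintype.card S : ℝ)⁻¹) ^ n * (Fintype.card S : ℝ) ^ n) := by ring
    _ = Real.exp (|lam| * D) * Real.exp (lam * birk f 0 n x)
          * (Zmn σ f lam 0 n * Zmn σ f lam n m) := by rw [hqq, mul_one]
    _ ≤ Real.exp (|lam| * D) * Real.exp (lam * birk f 0 n x)
          * (Real.exp (|lam| * D) * Real.exp (|lam| * D) * Zmn σ f lam 0 m) :=
        mul_le_mul_of_nonneg_left hZZ (by positivity)
    _ = Real.exp (3 * (|lam| * D)) * Real.exp (lam * birk f 0 n x) * Zmn σ f lam 0 m := by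
        rw [he3]; ring

include hσ hfc hfb hH2 in
lemma nu_cyl_ge (h0 : Fintype.card S ≠ 0) {n m : ℕ} (hn : 1 ≤ n) (hnm : n ≤ m) (x : ℕ → S) :
    (Real.exp (3 * (|lam| * D)))⁻¹
        * (Real.exp (lam * birk f 0 n x) / ((Fintype.card S : ℝ) ^ n * Zmn σ f lam 0 n))
      ≤ ((σ.withDensity fun y =>
          ENNReal.ofReal (Real.exp (lam * birk f 0 m y) / Zmn σ f lam 0 m))
            (cyl fun i : Fin n => x (i : ℕ))).toReal := by
  have hq : (0 : ℝ) < (Fintype.card S : ℝ) := by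
    exact_mod_cast Nat.pos_of_ne_zero h0
  have hqn : (0 : ℝ) < (Fintype.card S : ℝ) ^ n := pow_pos hq n
  have hqq : ((Fintype.card S : ℝ)⁻¹) ^ n * (Fintype.card S : ℝ) ^ n = 1 := by
    rw [← mul_pow, inv_mul_cancel₀ hq.ne', one_pow]
  have hZn : 0 < Zmn σ f lam 0 n := Zmn_pos hfc hfb lam σ 0 n
  have hZm : 0 < Zmn σ f lam 0 m := Zmn_pos hfc hfb lam σ 0 m
  have hZnm : 0 < Zmn σ f lam n m := Zmn_pos hfc hfb lam σ n m
  have hEn : 0 < Real.exp (lam * birk f 0 n x) := Real.exp_pos _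
  rw [nu_cyl_toReal σ hfc hfb lam m _]
  have h1 := setIntegral_head_ge σ hσ hfc hfb hH2 lam h0 hn hnm x
  have h2 := Zm_le σ hσ hfc hfb hH2 lam h0 hn hnm
  have he3 : (Real.exp (3 * (|lam| * D)))⁻¹
      = Real.exp (-(|lam| * D)) * (Real.exp (-(|lam| * D)) * Real.exp (-(|lam| * D))) := by
    rw [← Real.exp_add, ← Real.exp_add, ← Real.exp_neg]; ring_nf
  rw [he3, show (Real.exp (-(|lam| * D)) * (Real.exp (-(|lam| * D)) * Real.exp (-(|lam| * D))))
        * (Real.exp (lam * birk f 0 n x) / ((Fintype.card S : ℝ) ^ n * Zmn σ f lam 0 n))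
      = (Real.exp (lam * birk f 0 n x)
          * (Real.exp (-(|lam| * D)) * (Real.exp (-(|lam| * D)) * Real.exp (-(|lam| * D)))))
        / ((Fintype.card S : ℝ) ^ n * Zmn σ f lam 0 n) from by ring,
    div_le_div_iff₀ (mul_pos hqn hZn) hZm]
  calc Real.exp (lam * birk f 0 n x)
        * (Real.exp (-(|lam| * D)) * (Real.exp (-(|lam| * D)) * Real.exp (-(|lam| * D))))
        * Zmn σ f lam 0 m
      ≤ Real.exp (lam * birk f 0 n x)
        * (Real.exp (-(|lam| * D)) * (Real.exp (-(|lam| * D)) * Real.exp (-(|lam| * D))))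
        * (Real.exp (|lam| * D) * Real.exp (|lam| * D) * Zmn σ f lam 0 n
            * Zmn σ f lam n m) :=
        mul_le_mul_of_nonneg_left h2 (by positivity)
    _ = Real.exp (-(|lam| * D)) * Real.exp (lam * birk f 0 n x)
          * (Zmn σ f lam 0 n * Zmn σ f lam n m)
          * ((Real.exp (-(|lam| * D)) * Real.exp (|lam| * D))
            * (Real.exp (-(|lam| * D)) * Real.exp (|lam| * D))) := by ring
    _ = Real.exp (-(|lam| * D)) * Real.exp (lam * birk f 0 n x)
          * (Zmn σ f lam 0 n * Zmn σ f lam n m) := by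
        have hee : Real.exp (-(|lam| * D)) * Real.exp (|lam| * D) = 1 := by
          rw [← Real.exp_add]; simp
        rw [hee]; ring
    _ = Real.exp (-(|lam| * D)) * Real.exp (lam * birk f 0 n x)
          * (Zmn σ f lam 0 n * Zmn σ f lam n m)
          * (((Fintype.card S : ℝ)⁻¹) ^ n * (Fintype.card S : ℝ) ^ n) := by
        rw [hqq, mul_one]
    _ = (Real.exp (-(|lam| * D)) * Real.exp (lam * birk f 0 n x)
          * (((Fintype.card S : ℝ)⁻¹) ^ n * Zmn σ f lam n m))
          * ((Fintype.card S : ℝ) ^ n * Zmn σ f lam 0 n) := by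
        ring
    _ ≤ (∫ y in cyl fun i : Fin n => x (i : ℕ), Real.exp (lam * birk f 0 m y) ∂σ)
          * ((Fintype.card S : ℝ) ^ n * Zmn σ f lam 0 n) :=
        mul_le_mul_of_nonneg_right h1 (by positivity)

end Core5

section Limit
variable {S : Type*} [Fintype S] [TopologicalSpace S] [DiscreteTopology S]
  [MeasurableSpace S] [BorelSpace S] [Nonempty S]
  (σ : Measure (ℕ → S)) [IsProbabilityMeasure σ]
  (hσ : ∀ (m : ℕ) (a : Fin m → S), σ (cyl a) = (Fintype.card S : ℝ≥0∞)⁻¹ ^ m)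
  {f : ℕ → (ℕ → S) → ℝ} (hfc : ∀ n, Continuous (f n))
  {M : ℝ} (hfb : ∀ n x, |f n x| ≤ M) {D : ℝ} (hH2 : H2 f D) (lam : ℝ)

lemma integral_indicator_cyl {n : ℕ} (a : Fin n → S) (ν : Measure (ℕ → S)) :
    ∫ y, BoundedContinuousFunction.indicator (cyl a) (isClopen_cyl a) y ∂ν
      = (ν (cyl a)).toReal := by
  calc ∫ y, BoundedContinuousFunction.indicator (cyl a) (isClopen_cyl a) y ∂ν
      = ∫ y, Set.indicator (cyl a) (fun _ => (1 : ℝ)) y ∂ν := rfl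
    _ = (ν (cyl a)).toReal • (1 : ℝ) := integral_indicator_const (1 : ℝ) (measurableSet_cyl a)
    _ = (ν (cyl a)).toReal := by rw [smul_eq_mul, mul_one]

include hσ hfc hfb hH2 in
lemma gibbs_of_limit (h0 : Fintype.card S ≠ 0)
    (N : ℕ → ℕ) (hN : StrictMono N)
    (μ : Measure (ℕ → S)) [IsProbabilityMeasure μ]
    (hlim : ∀ g : BoundedContinuousFunction (ℕ → S) ℝ,
      Tendsto (fun j => ∫ x, g x
          ∂(σ.withDensity fun x =>
              ENNReal.ofReal (Real.exp (lam * birk f 0 (N j) x) / Zmn σ f lam 0 (N j))))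
        atTop (𝓝 (∫ x, g x ∂μ)))
    {n : ℕ} (hn : 1 ≤ n) (x : ℕ → S) :
    (Real.exp (3 * (|lam| * D)))⁻¹
        * (Real.exp (lam * birk f 0 n x) / ((Fintype.card S : ℝ) ^ n * Zmn σ f lam 0 n))
      ≤ (μ (cyl fun i : Fin n => x (i : ℕ))).toReal
    ∧ (μ (cyl fun i : Fin n => x (i : ℕ))).toReal
      ≤ Real.exp (3 * (|lam| * D))
        * (Real.exp (lam * birk f 0 n x) / ((Fintype.card S : ℝ) ^ n * Zmn σ f lam 0 n)) := by
  set g := BoundedContinuousFunction.indicator (cyl fun i : Fin n => x (i : ℕ))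
    (isClopen_cyl _) with hg
  have htend := hlim g
  rw [integral_indicator_cyl (fun i : Fin n => x (i : ℕ)) μ] at htend
  constructor
  · refine ge_of_tendsto htend ?_
    rw [eventually_atTop]
    refine ⟨n, fun j hj => ?_⟩
    rw [integral_indicator_cyl]
    exact nu_cyl_ge σ hσ hfc hfb hH2 lam h0 hn (le_trans hj (hN.le_apply)) x
  · refine le_of_tendsto htend ?_
    rw [eventually_atTop]
    refine ⟨n, fun j hj => ?_⟩
    rw [integral_indicator_cyl]
    exact nu_cyl_le σ hσ hfc hfb hH2 lam h0 hn (le_trans hj (hN.le_apply)) x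

end Limit

section AC
variable {S : Type*} [Fintype S] [TopologicalSpace S] [DiscreteTopology S]
  [MeasurableSpace S] [BorelSpace S] [Nonempty S]

lemma cyl_subset_of_le {n : ℕ} (a : Fin n → S) (y : ℕ → S) (hy : y ∈ cyl a) :
    cyl (fun i : Fin (n + 1) => y (i : ℕ)) ⊆ cyl a := by
  intro z hz i
  have h : z (i : ℕ) = y (i : ℕ) := hz ⟨(i : ℕ), by omega⟩
  exact h.trans (hy i)

lemma abscont_of_cyl_bounds (μ μ' : Measure (ℕ → S))
    [IsProbabilityMeasure μ] [IsProbabilityMeasure μ']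
    (ρ : ℕ → (ℕ → S) → ℝ) (hρ : ∀ n x, 0 < ρ n x) (C : ℝ) (hC : 1 ≤ C)
    (h1 : ∀ n, 1 ≤ n → ∀ x : ℕ → S, (μ (cyl fun i : Fin n => x (i : ℕ))).toReal ≤ C * ρ n x)
    (h2 : ∀ n, 1 ≤ n → ∀ x : ℕ → S,
      C⁻¹ * ρ n x ≤ (μ' (cyl fun i : Fin n => x (i : ℕ))).toReal) :
    μ ≪ μ' := by
  classical
  have hC0 : (0 : ℝ) < C := lt_of_lt_of_le one_pos hC
  set K : ℝ≥0∞ := ENNReal.ofReal (C * C) with hK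
  have hK0 : K ≠ 0 := by
    simp only [hK, ne_eq, ENNReal.ofReal_eq_zero, not_le]
    positivity
  have hKtop : K ≠ ∞ := ENNReal.ofReal_ne_top
  -- cylinder comparison
  have hcyl : ∀ n, 1 ≤ n → ∀ a : Fin n → S, μ (cyl a) ≤ K * μ' (cyl a) := by
    intro n hn a
    rw [cyl_extpt a]
    set x := extpt a
    have ha := h1 n hn x
    have hb := h2 n hn x
    have hreal : (μ (cyl fun i : Fin n => x (i : ℕ))).toReal
        ≤ C * C * (μ' (cyl fun i : Fin n => x (i : ℕ))).toReal := by
      have : ρ n x ≤ C * (μ' (cyl fun i : Fin n => x (i : ℕ))).toReal := by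
        rw [inv_mul_le_iff₀ hC0] at hb
        linarith
      nlinarith
    calc μ (cyl fun i : Fin n => x (i : ℕ))
        = ENNReal.ofReal (μ (cyl fun i : Fin n => x (i : ℕ))).toReal :=
          (ENNReal.ofReal_toReal (measure_ne_top μ _)).symm
      _ ≤ ENNReal.ofReal (C * C * (μ' (cyl fun i : Fin n => x (i : ℕ))).toReal) :=
          ENNReal.ofReal_le_ofReal hreal
      _ = K * ENNReal.ofReal (μ' (cyl fun i : Fin n => x (i : ℕ))).toReal := by
          rw [hK, ENNReal.ofReal_mul (by positivity)]
      _ = K * μ' (cyl fun i : Fin n => x (i : ℕ)) := by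
          rw [ENNReal.ofReal_toReal (measure_ne_top μ' _)]
  -- open set comparison
  have hopen : ∀ U : Set (ℕ → S), IsOpen U → μ U ≤ K * μ' U := by
    intro U hU
    set s : ℕ → Set (ℕ → S) :=
      fun j => ⋃ (a : Fin (j + 1) → S) (_ : cyl a ⊆ U), cyl a with hs
    have hmono : Monotone s := by
      refine monotone_nat_of_le_succ fun j => ?_
      intro y hy
      simp only [hs, Set.mem_iUnion] at hy ⊢
      obtain ⟨a, haU, hya⟩ := hy
      exact ⟨fun i : Fin (j + 2) => y (i : ℕ),
        (cyl_subset_of_le a y hya).trans haU, fun i => rfl⟩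
    have hsub : ∀ j, s j ⊆ U := by
      intro j
      simp only [hs, Set.iUnion_subset_iff]
      exact fun a ha => ha
    have hUeq : (⋃ j, s j) = U := by
      refine Set.Subset.antisymm (Set.iUnion_subset hsub) fun y hy => ?_
      obtain ⟨I, u, hIu, hpi⟩ := isOpen_pi_iff.mp hU y hy
      set j := I.sup id with hj
      refine Set.mem_iUnion.mpr ⟨j, ?_⟩
      simp only [hs, Set.mem_iUnion]
      refine ⟨fun i : Fin (j + 1) => y (i : ℕ), ?_, fun i => rfl⟩
      intro z hz
      refine hpi fun i hi => ?_
      have hij : i < j + 1 := by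
        have : i ≤ I.sup id := Finset.le_sup (f := id) hi
        omega
      have := hz ⟨i, hij⟩
      rw [this]
      exact (hIu i hi).2
    have hstep : ∀ j, μ (s j) ≤ K * μ' (s j) := by
      intro j
      set T : Finset (Fin (j + 1) → S) := Finset.univ.filter (fun a => cyl a ⊆ U) with hT
      have hsT : s j = ⋃ a ∈ T, cyl a := by
        simp only [hs, hT]
        ext y
        simp [Finset.mem_filter]
      have hdisj : (T : Set (Fin (j + 1) → S)).PairwiseDisjoint (fun a => cyl a) :=
        fun a _ b _ hab => pairwise_disjoint_cyl (j + 1) hab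
      rw [hsT, measure_biUnion_finset hdisj (fun a _ => measurableSet_cyl a),
        measure_biUnion_finset hdisj (fun a _ => measurableSet_cyl a), Finset.mul_sum]
      exact Finset.sum_le_sum fun a _ => hcyl (j + 1) (by omega) a
    rw [← hUeq, hmono.measure_iUnion]
    refine iSup_le fun j => (hstep j).trans ?_
    exact mul_le_mul_right (measure_mono (Set.subset_iUnion s j)) K
  -- measurable sets via outer regularity
  have hmeas : ∀ A : Set (ℕ → S), μ A ≤ K * μ' A := by
    intro A
    refine ENNReal.le_of_forall_pos_le_add fun ε hε hfin => ?_
    have hδ : (ε : ℝ≥0∞) / K ≠ 0 := by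
      simp only [ne_eq, ENNReal.div_eq_zero_iff, not_or]
      exact ⟨by exact_mod_cast hε.ne', hKtop⟩
    obtain ⟨U, hAU, hUo, hUlt⟩ := Set.exists_isOpen_lt_add A (measure_ne_top μ' A) hδ
    calc μ A ≤ μ U := measure_mono hAU
      _ ≤ K * μ' U := hopen U hUo
      _ ≤ K * (μ' A + ε / K) := mul_le_mul_right hUlt.le K
      _ = K * μ' A + K * (ε / K) := by rw [mul_add]
      _ = K * μ' A + ε := by rw [ENNReal.mul_div_cancel' (fun h => absurd h hK0) (fun h => absurd h hKtop)]
  refine Measure.AbsolutelyContinuous.mk fun A hA h0 => ?_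
  have := hmeas A
  rw [h0, mul_zero] at this
  exact le_antisymm this zero_le

end AC


/-- Gibbs property of weak limits: under (H2), any weak limit `μ` of the
measures `μ_{n,λ} = (exp(λ S_n f)/Z_n(λ)) dσ` along a subsequence satisfies the Gibbs
property, and any two weak limit points are equivalent. -/
theorem gibbs_property_of_weak_limits {S : Type*} [Fintype S] [TopologicalSpace S]
    [DiscreteTopology S] [MeasurableSpace S] [BorelSpace S] (hq : 2 ≤ Fintype.card S)
    (σ : Measure (ℕ → S)) [IsProbabilityMeasure σ]
    (hσ : ∀ (m : ℕ) (a : Fin m → S), σ (cyl a) = (Fintype.card S : ℝ≥0∞)⁻¹ ^ m)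
    (f : ℕ → (ℕ → S) → ℝ) (hfc : ∀ n, Continuous (f n))
    (M : ℝ) (hfb : ∀ n x, |f n x| ≤ M)
    (D : ℝ) (hH2 : H2 f D) (lam : ℝ)
    (N : ℕ → ℕ) (hN : StrictMono N)
    (μ : Measure (ℕ → S)) [IsProbabilityMeasure μ]
    (hlim : ∀ g : BoundedContinuousFunction (ℕ → S) ℝ,
      Tendsto (fun j => ∫ x, g x
          ∂(σ.withDensity fun x =>
              ENNReal.ofReal (Real.exp (lam * birk f 0 (N j) x) / Zmn σ f lam 0 (N j))))
        atTop (𝓝 (∫ x, g x ∂μ))) :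
    (∃ C : ℝ, 1 ≤ C ∧ ∀ n : ℕ, 1 ≤ n → ∀ x : ℕ → S,
      C⁻¹ * (Real.exp (lam * birk f 0 n x) / ((Fintype.card S : ℝ) ^ n * Zmn σ f lam 0 n))
          ≤ (μ (cyl fun i : Fin n => x i)).toReal ∧
      (μ (cyl fun i : Fin n => x i)).toReal
          ≤ C * (Real.exp (lam * birk f 0 n x) / ((Fintype.card S : ℝ) ^ n * Zmn σ f lam 0 n))) ∧
    (∀ (μ' : Measure (ℕ → S)), IsProbabilityMeasure μ' → ∀ N' : ℕ → ℕ, StrictMono N' →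
      (∀ g : BoundedContinuousFunction (ℕ → S) ℝ,
        Tendsto (fun j => ∫ x, g x
            ∂(σ.withDensity fun x =>
                ENNReal.ofReal (Real.exp (lam * birk f 0 (N' j) x) / Zmn σ f lam 0 (N' j))))
          atTop (𝓝 (∫ x, g x ∂μ'))) →
      μ ≪ μ' ∧ μ' ≪ μ) := by
  have h0 : Fintype.card S ≠ 0 := by omega
  haveI : Nonempty S := Fintype.card_pos_iff.mp (by omega)
  have hD : 0 ≤ D := by
    have := hH2 1 le_rfl (fun _ => Classical.arbitrary S) (fun _ => Classical.arbitrary S)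
      (fun i _ => rfl)
    simpa using this
  have hC1 : 1 ≤ Real.exp (3 * (|lam| * D)) :=
    Real.one_le_exp (by
      have : (0:ℝ) ≤ |lam| * D := mul_nonneg (abs_nonneg _) hD
      linarith)
  have hρ : ∀ (n : ℕ) (x : ℕ → S),
      0 < Real.exp (lam * birk f 0 n x) / ((Fintype.card S : ℝ) ^ n * Zmn σ f lam 0 n) := by
    intro n x
    refine div_pos (Real.exp_pos _) (mul_pos (pow_pos ?_ n) (Zmn_pos hfc hfb lam σ 0 n))
    exact_mod_cast Nat.pos_of_ne_zero h0
  constructor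
  · exact ⟨Real.exp (3 * (|lam| * D)), hC1,
      fun n hn x => gibbs_of_limit σ hσ hfc hfb hH2 lam h0 N hN μ hlim hn x⟩
  · intro μ' hμ' N' hN' hlim'
    haveI := hμ'
    have g1 := fun (n : ℕ) (hn : 1 ≤ n) (x : ℕ → S) =>
      gibbs_of_limit σ hσ hfc hfb hH2 lam h0 N hN μ hlim hn x
    have g2 := fun (n : ℕ) (hn : 1 ≤ n) (x : ℕ → S) =>
      gibbs_of_limit σ hσ hfc hfb hH2 lam h0 N' hN' μ' hlim' hn x
    constructor
    · exact abscont_of_cyl_bounds μ μ' _ hρ _ hC1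
        (fun n hn x => (g1 n hn x).2) (fun n hn x => (g2 n hn x).1)
    · exact abscont_of_cyl_bounds μ' μ _ hρ _ hC1
        (fun n hn x => (g2 n hn x).2) (fun n hn x => (g1 n hn x).1)
end
end

section
/- (Quasi-Bernoulli property.) Assume hypothesis (H2) and fix λ ∈ ℝ and C₀ ≥ 1. Suppose μ is a Borel probability measure on X such that C₀^{−1} ≤ μ([x_0,…,x_{n−1}]) · q^n Z_n(λ)/exp(λ S_n f(x)) ≤ C₀ for all n ≥ 1 and x ∈ X, and suppose that for each n ≥ 1, ν_n is a Borel probability measure on X such that C₀^{−1} ≤ ν_n([y_0,…,y_{m−1}]) · q^m Z_{n,n+m}(λ)/exp(λ Σ_{k=0}^{m−1} f_{n+k}(T^k y)) ≤ C₀ for all m ≥ 1 and y ∈ X. Then there is a constant C ≥ 1 (depending only on C₀, λ and the constant in (H2)) such that for all n, m ≥ 1 and all words I ∈ S^n, J ∈ S^m, C^{−1} μ([I]) ν_n([J]) ≤ μ([IJ]) ≤ C μ([I]) ν_n([J]), where IJ denotes the concatenated word. -/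
open MeasureTheory Filter Finset
open scoped ENNReal Topology

noncomputable section

lemma shift_iter {S : Type*} : ∀ (k : ℕ) (x : ℕ → S) (n : ℕ), shift^[k] x n = x (n + k)
  | 0, _, _ => rfl
  | (k+1), x, n => by
      rw [Function.iterate_succ_apply, shift_iter k (shift x) n]
      rfl

lemma cyl_meas {S : Type*} [MeasurableSpace S] [TopologicalSpace S] [DiscreteTopology S]
    [BorelSpace S] {m : ℕ} (a : Fin m → S) : MeasurableSet (cyl a) := by
  have h : cyl a = ⋂ i : Fin m, (fun y : ℕ → S => y (i : ℕ)) ⁻¹' {a i} := by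
    ext y; simp [cyl, Set.mem_iInter]
  rw [h]
  exact MeasurableSet.iInter fun i =>
    (measurable_pi_apply (i : ℕ)) ((isOpen_discrete _).measurableSet)

lemma append_left' {S : Type*} {n m : ℕ} (I : Fin n → S) (J : Fin m → S)
    (k : Fin (n + m)) (h : (k : ℕ) < n) : Fin.append I J k = I ⟨k, h⟩ := by
  have h2 := Fin.append_left I J ⟨(k:ℕ), h⟩
  have h3 : Fin.castAdd m ⟨(k:ℕ), h⟩ = k := Fin.ext rfl
  rwa [h3] at h2

lemma append_right' {S : Type*} {n m : ℕ} (I : Fin n → S) (J : Fin m → S)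
    (k : Fin (n + m)) (h : n ≤ (k : ℕ)) :
    Fin.append I J k = J ⟨(k:ℕ) - n, by have := k.isLt; omega⟩ := by
  have h2 := Fin.append_right I J ⟨(k:ℕ) - n, by have := k.isLt; omega⟩
  have h3 : Fin.natAdd n ⟨(k:ℕ) - n, by have := k.isLt; omega⟩ = k :=
    Fin.ext (by simp; omega)
  rwa [h3] at h2

lemma mem_cyl_append {S : Type*} {n m : ℕ} (I : Fin n → S) (J : Fin m → S)
    (y : ℕ → S) : y ∈ cyl (Fin.append I J) ↔ y ∈ cyl I ∧ ∀ i : Fin m, y (n + i) = J i := by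
  constructor
  · intro h
    constructor
    · intro i
      have h1 := h (Fin.castAdd m i)
      rwa [Fin.append_left, Fin.coe_castAdd] at h1
    · intro i
      have h1 := h (Fin.natAdd n i)
      rwa [Fin.append_right, Fin.coe_natAdd] at h1
  · rintro ⟨h1, h2⟩ k
    rcases lt_or_ge (k:ℕ) n with h | h
    · rw [append_left' I J k h]; exact h1 ⟨k, h⟩
    · rw [append_right' I J k h]
      have h3 := h2 ⟨(k:ℕ) - n, by have := k.isLt; omega⟩
      simpa [Nat.add_sub_cancel' h] using h3

lemma cyl_decomp {S : Type*} {n m : ℕ} (I : Fin n → S) :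
    cyl I = ⋃ J : Fin m → S, cyl (Fin.append I J) := by
  ext y
  simp only [Set.mem_iUnion, mem_cyl_append]
  constructor
  · intro hy
    exact ⟨fun i => y (n + i), hy, fun i => rfl⟩
  · rintro ⟨J, hJ, _⟩; exact hJ

lemma cyl_append_disjoint {S : Type*} {n m : ℕ} (I : Fin n → S) :
    Pairwise (Function.onFun Disjoint fun J : Fin m → S => cyl (Fin.append I J)) := by
  intro J J' hne
  rw [Function.onFun, Set.disjoint_left]
  intro y hy hy'
  apply hne
  funext i
  have h1 := ((mem_cyl_append I J y).mp hy).2 i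
  have h2 := ((mem_cyl_append I J' y).mp hy').2 i
  rw [← h1, h2]

lemma measure_cyl_sum {S : Type*} [Fintype S] [TopologicalSpace S] [DiscreteTopology S]
    [MeasurableSpace S] [BorelSpace S] (ρ : Measure (ℕ → S)) {n : ℕ} (m : ℕ) (I : Fin n → S) :
    ρ (cyl I) = ∑ J : Fin m → S, ρ (cyl (Fin.append I J)) := by
  rw [cyl_decomp (m := m) I,
    measure_iUnion (cyl_append_disjoint I) (fun J => cyl_meas _), tsum_fintype]

lemma sum_cyl_univ {S : Type*} [Fintype S] [TopologicalSpace S] [DiscreteTopology S]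
    [MeasurableSpace S] [BorelSpace S] (ρ : Measure (ℕ → S)) [IsProbabilityMeasure ρ] (m : ℕ) :
    ∑ J : Fin m → S, ρ (cyl J) = 1 := by
  have hu : (Set.univ : Set (ℕ → S)) = ⋃ J : Fin m → S, cyl J := by
    ext y; simp only [Set.mem_univ, true_iff, Set.mem_iUnion]
    exact ⟨fun i => y i, fun i => rfl⟩
  have h2 : Pairwise (Function.onFun Disjoint fun J : Fin m → S => cyl J) := by
    intro J J' hne
    rw [Function.onFun, Set.disjoint_left]
    intro y hy hy'
    exact hne (funext fun i => by rw [← hy i, hy' i])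
  rw [← tsum_fintype (L := .unconditional _), ← measure_iUnion h2 (fun J => cyl_meas _), ← hu, measure_univ]

lemma birk_split_s3 {S : Type*} (f : ℕ → (ℕ → S) → ℝ) (n m : ℕ) (z : ℕ → S) :
    birk f 0 (n + m) z = birk f 0 n z + ∑ k ∈ Finset.range m, f (n + k) (shift^[k] (shift^[n] z)) := by
  unfold birk
  rw [← Finset.sum_Ico_consecutive _ (Nat.zero_le n) (Nat.le_add_right n m)]
  congr 1
  rw [Finset.sum_Ico_eq_sum_range]
  simp only [Nat.add_sub_cancel_left]
  refine Finset.sum_congr rfl fun k _ => ?_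
  rw [add_comm n k, Function.iterate_add_apply]


lemma gibbs_ratio {C₀ P Q G E1 E2 a b c : ℝ} (hC₀ : 0 < C₀)
    (ha : 0 ≤ a) (hb : 0 ≤ b) (hc : 0 ≤ c) (hE1 : 0 < E1) (hE2 : 0 < E2)
    (h1l : C₀⁻¹ ≤ a * P / E1) (h1r : a * P / E1 ≤ C₀)
    (h2l : C₀⁻¹ ≤ c * G / (E1 * E2)) (h2r : c * G / (E1 * E2) ≤ C₀)
    (h3l : C₀⁻¹ ≤ b * Q / E2) (h3r : b * Q / E2 ≤ C₀) :
    0 < a ∧ 0 < b ∧ 0 < c ∧ 0 < P ∧ 0 < Q ∧ 0 < G ∧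
      (C₀ ^ 3)⁻¹ * (a * b * (P * Q)) ≤ c * G ∧
      c * G ≤ C₀ ^ 3 * (a * b * (P * Q)) := by
  have hCi : 0 < C₀⁻¹ := inv_pos.mpr hC₀
  have h1l' : C₀⁻¹ * E1 ≤ a * P := (le_div_iff₀ hE1).mp h1l
  have h1r' : a * P ≤ C₀ * E1 := by rw [div_le_iff₀ hE1] at h1r; exact h1r
  have h3l' : C₀⁻¹ * E2 ≤ b * Q := (le_div_iff₀ hE2).mp h3l
  have h3r' : b * Q ≤ C₀ * E2 := by rw [div_le_iff₀ hE2] at h3r; exact h3r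
  have hE12 : 0 < E1 * E2 := mul_pos hE1 hE2
  have h2l' : C₀⁻¹ * (E1 * E2) ≤ c * G := (le_div_iff₀ hE12).mp h2l
  have h2r' : c * G ≤ C₀ * (E1 * E2) := by rw [div_le_iff₀ hE12] at h2r; exact h2r
  have split : ∀ x y : ℝ, 0 ≤ x → 0 < x * y → 0 < x ∧ 0 < y := by
    intro x y hx hxy
    rcases mul_pos_iff.mp hxy with ⟨u, v⟩ | ⟨u, v⟩
    · exact ⟨u, v⟩
    · linarith
  obtain ⟨hapos, hPpos⟩ := split a P ha (lt_of_lt_of_le (mul_pos hCi hE1) h1l')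
  obtain ⟨hbpos, hQpos⟩ := split b Q hb (lt_of_lt_of_le (mul_pos hCi hE2) h3l')
  obtain ⟨hcpos, hGpos⟩ := split c G hc (lt_of_lt_of_le (mul_pos hCi hE12) h2l')
  refine ⟨hapos, hbpos, hcpos, hPpos, hQpos, hGpos, ?_, ?_⟩
  · have hE1ge : C₀⁻¹ * (a * P) ≤ E1 := by
      calc C₀⁻¹ * (a * P) ≤ C₀⁻¹ * (C₀ * E1) := mul_le_mul_of_nonneg_left h1r' hCi.le
        _ = E1 := inv_mul_cancel_left₀ hC₀.ne' E1
    have hE2ge : C₀⁻¹ * (b * Q) ≤ E2 := by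
      calc C₀⁻¹ * (b * Q) ≤ C₀⁻¹ * (C₀ * E2) := mul_le_mul_of_nonneg_left h3r' hCi.le
        _ = E2 := inv_mul_cancel_left₀ hC₀.ne' E2
    have hmm : (C₀⁻¹ * (a * P)) * (C₀⁻¹ * (b * Q)) ≤ E1 * E2 :=
      mul_le_mul hE1ge hE2ge
        (mul_nonneg hCi.le (mul_nonneg hb hQpos.le)) hE1.le
    calc (C₀ ^ 3)⁻¹ * (a * b * (P * Q))
        = C₀⁻¹ * ((C₀⁻¹ * (a * P)) * (C₀⁻¹ * (b * Q))) := by ring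
      _ ≤ C₀⁻¹ * (E1 * E2) := mul_le_mul_of_nonneg_left hmm hCi.le
      _ ≤ c * G := h2l'
  · have hE1le : E1 ≤ C₀ * (a * P) := by
      calc E1 = C₀ * (C₀⁻¹ * E1) := (mul_inv_cancel_left₀ hC₀.ne' E1).symm
        _ ≤ C₀ * (a * P) := mul_le_mul_of_nonneg_left h1l' hC₀.le
    have hE2le : E2 ≤ C₀ * (b * Q) := by
      calc E2 = C₀ * (C₀⁻¹ * E2) := (mul_inv_cancel_left₀ hC₀.ne' E2).symm
        _ ≤ C₀ * (b * Q) := mul_le_mul_of_nonneg_left h3l' hC₀.le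
    have hmm : E1 * E2 ≤ (C₀ * (a * P)) * (C₀ * (b * Q)) :=
      mul_le_mul hE1le hE2le hE2.le
        (mul_nonneg hC₀.le (mul_nonneg ha hPpos.le))
    calc c * G ≤ C₀ * (E1 * E2) := h2r'
      _ ≤ C₀ * ((C₀ * (a * P)) * (C₀ * (b * Q))) := mul_le_mul_of_nonneg_left hmm hC₀.le
      _ = C₀ ^ 3 * (a * b * (P * Q)) := by ring

/-- Quasi-Bernoulli property: if `μ` is a Gibbs measure at parameter `λ`
and, for each `n ≥ 1`, `ν n` is a Gibbs measure for the shifted sequence of potentials,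
then `μ([IJ]) ≍ μ([I]) ν_n([J])` with uniform constants. -/
theorem quasi_bernoulli {S : Type*} [Fintype S] [TopologicalSpace S]
    [DiscreteTopology S] [MeasurableSpace S] [BorelSpace S] (hq : 2 ≤ Fintype.card S)
    (σ : Measure (ℕ → S)) [IsProbabilityMeasure σ]
    (hσ : ∀ (m : ℕ) (a : Fin m → S), σ (cyl a) = (Fintype.card S : ℝ≥0∞)⁻¹ ^ m)
    (f : ℕ → (ℕ → S) → ℝ) (hfc : ∀ n, Continuous (f n))
    (M : ℝ) (hfb : ∀ n x, |f n x| ≤ M)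
    (D : ℝ) (hH2 : H2 f D) (lam : ℝ) (C₀ : ℝ) (hC₀ : 1 ≤ C₀)
    (μ : Measure (ℕ → S)) [IsProbabilityMeasure μ]
    (hμ : ∀ n : ℕ, 1 ≤ n → ∀ x : ℕ → S,
      C₀⁻¹ ≤ (μ (cyl fun i : Fin n => x i)).toReal
          * ((Fintype.card S : ℝ) ^ n * Zmn σ f lam 0 n) / Real.exp (lam * birk f 0 n x) ∧
      (μ (cyl fun i : Fin n => x i)).toReal
          * ((Fintype.card S : ℝ) ^ n * Zmn σ f lam 0 n) / Real.exp (lam * birk f 0 n x) ≤ C₀)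
    (ν : ℕ → Measure (ℕ → S)) (hνprob : ∀ n, IsProbabilityMeasure (ν n))
    (hν : ∀ n : ℕ, 1 ≤ n → ∀ m : ℕ, 1 ≤ m → ∀ y : ℕ → S,
      C₀⁻¹ ≤ (ν n (cyl fun i : Fin m => y i)).toReal
          * ((Fintype.card S : ℝ) ^ m * Zmn σ f lam n (n + m))
          / Real.exp (lam * ∑ k ∈ Finset.range m, f (n + k) (shift^[k] y)) ∧
      (ν n (cyl fun i : Fin m => y i)).toReal
          * ((Fintype.card S : ℝ) ^ m * Zmn σ f lam n (n + m))
          / Real.exp (lam * ∑ k ∈ Finset.range m, f (n + k) (shift^[k] y)) ≤ C₀) :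
    ∃ C : ℝ, 1 ≤ C ∧ ∀ (n m : ℕ), 1 ≤ n → 1 ≤ m → ∀ (I : Fin n → S) (J : Fin m → S),
      C⁻¹ * ((μ (cyl I)).toReal * (ν n (cyl J)).toReal) ≤ (μ (cyl (Fin.append I J))).toReal ∧
      (μ (cyl (Fin.append I J))).toReal ≤ C * ((μ (cyl I)).toReal * (ν n (cyl J)).toReal) := by
  have hC₀pos : (0 : ℝ) < C₀ := lt_of_lt_of_le one_pos hC₀
  obtain ⟨s₀⟩ : Nonempty S := Fintype.card_pos_iff.mp (by omega)
  refine ⟨C₀ ^ 6, one_le_pow₀ hC₀, ?_⟩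
  intro n m hn hm I J
  haveI := hνprob n
  set a : ℝ := (μ (cyl I)).toReal with hadef
  set P : ℝ := (Fintype.card S : ℝ) ^ n * Zmn σ f lam 0 n with hPdef
  set Q : ℝ := (Fintype.card S : ℝ) ^ m * Zmn σ f lam n (n + m) with hQdef
  set G : ℝ := (Fintype.card S : ℝ) ^ (n + m) * Zmn σ f lam 0 (n + m) with hGdef
  have key : ∀ J' : Fin m → S,
      0 < a ∧ 0 < (ν n (cyl J')).toReal ∧ 0 < (μ (cyl (Fin.append I J'))).toReal ∧
      0 < P ∧ 0 < Q ∧ 0 < G ∧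
      (C₀ ^ 3)⁻¹ * (a * (ν n (cyl J')).toReal * (P * Q))
        ≤ (μ (cyl (Fin.append I J'))).toReal * G ∧
      (μ (cyl (Fin.append I J'))).toReal * G
        ≤ C₀ ^ 3 * (a * (ν n (cyl J')).toReal * (P * Q)) := by
    intro J'
    obtain ⟨z, hzdef⟩ : ∃ z : ℕ → S,
        z = fun i => if h : i < n + m then Fin.append I J' ⟨i, h⟩ else s₀ := ⟨_, rfl⟩
    have hz1 : (fun i : Fin n => z i) = I := by
      funext i
      have hi : (i : ℕ) < n + m := by omega
      rw [hzdef]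
      simp only
      rw [dif_pos hi, append_left' I J' ⟨(i : ℕ), hi⟩ i.isLt]
    have hz2 : (fun i : Fin (n + m) => z i) = Fin.append I J' := by
      funext i
      rw [hzdef]
      simp only
      rw [dif_pos i.isLt]
    have hz3 : (fun i : Fin m => shift^[n] z i) = J' := by
      funext i
      have hi : (i : ℕ) + n < n + m := by omega
      rw [shift_iter n z (i : ℕ), hzdef]
      simp only
      rw [dif_pos hi, append_right' I J' ⟨(i : ℕ) + n, hi⟩ (Nat.le_add_left n (i : ℕ))]
      congr 1
      exact Fin.ext (by simp)
    obtain ⟨h1l, h1r⟩ := hμ n hn z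
    obtain ⟨h2l, h2r⟩ := hμ (n + m) (by omega) z
    obtain ⟨h3l, h3r⟩ := hν n hn m hm (shift^[n] z)
    rw [hz1] at h1l h1r
    rw [hz2] at h2l h2r
    rw [hz3] at h3l h3r
    rw [birk_split_s3 f n m z, mul_add, Real.exp_add] at h2l h2r
    obtain ⟨hapos, hbpos, hcpos, hPpos, hQpos, hGpos, hlow, hup⟩ :=
      gibbs_ratio hC₀pos ENNReal.toReal_nonneg ENNReal.toReal_nonneg ENNReal.toReal_nonneg
        (Real.exp_pos _) (Real.exp_pos _) h1l h1r h2l h2r h3l h3r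
    exact ⟨hapos, hbpos, hcpos, hPpos, hQpos, hGpos, hlow, hup⟩
  obtain ⟨hapos, hbpos, hcpos, hPpos, hQpos, hGpos, hklow, hkup⟩ := key J
  have hsumc : ∑ J' : Fin m → S, (μ (cyl (Fin.append I J'))).toReal = a := by
    rw [← ENNReal.toReal_sum (fun J' _ => measure_ne_top μ _), ← measure_cyl_sum μ m I]
  have hsumb : ∑ J' : Fin m → S, (ν n (cyl J')).toReal = 1 := by
    rw [← ENNReal.toReal_sum (fun J' _ => measure_ne_top _ _), sum_cyl_univ (ν n) m,
      ENNReal.toReal_one]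
  have hsum_up : a * G ≤ C₀ ^ 3 * (a * (P * Q)) := by
    calc a * G = ∑ J' : Fin m → S, (μ (cyl (Fin.append I J'))).toReal * G := by
          rw [← Finset.sum_mul, hsumc]
      _ ≤ ∑ J' : Fin m → S, C₀ ^ 3 * (a * (ν n (cyl J')).toReal * (P * Q)) :=
          Finset.sum_le_sum fun J' _ => (key J').2.2.2.2.2.2.2
      _ = ∑ J' : Fin m → S, (C₀ ^ 3 * (a * (P * Q))) * (ν n (cyl J')).toReal :=
          Finset.sum_congr rfl fun _ _ => by ring
      _ = (C₀ ^ 3 * (a * (P * Q))) * ∑ J' : Fin m → S, (ν n (cyl J')).toReal :=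
          (Finset.mul_sum _ _ _).symm
      _ = C₀ ^ 3 * (a * (P * Q)) := by rw [hsumb, mul_one]
  have hsum_low : (C₀ ^ 3)⁻¹ * (a * (P * Q)) ≤ a * G := by
    calc (C₀ ^ 3)⁻¹ * (a * (P * Q))
        = ((C₀ ^ 3)⁻¹ * (a * (P * Q))) * ∑ J' : Fin m → S, (ν n (cyl J')).toReal := by
          rw [hsumb, mul_one]
      _ = ∑ J' : Fin m → S, (C₀ ^ 3)⁻¹ * (a * (ν n (cyl J')).toReal * (P * Q)) := by
          rw [Finset.mul_sum]
          exact Finset.sum_congr rfl fun _ _ => by ring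
      _ ≤ ∑ J' : Fin m → S, (μ (cyl (Fin.append I J'))).toReal * G :=
          Finset.sum_le_sum fun J' _ => (key J').2.2.2.2.2.2.1
      _ = a * G := by rw [← Finset.sum_mul, hsumc]
  have hC3pos : (0 : ℝ) < C₀ ^ 3 := pow_pos hC₀pos 3
  have hG_le : G ≤ C₀ ^ 3 * (P * Q) := by
    have h4 : a * G ≤ a * (C₀ ^ 3 * (P * Q)) := by
      calc a * G ≤ C₀ ^ 3 * (a * (P * Q)) := hsum_up
        _ = a * (C₀ ^ 3 * (P * Q)) := by ring
    exact le_of_mul_le_mul_left h4 hapos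
  have hPQ_le : P * Q ≤ C₀ ^ 3 * G := by
    have h4 : a * (P * Q) ≤ a * (C₀ ^ 3 * G) := by
      calc a * (P * Q) = C₀ ^ 3 * ((C₀ ^ 3)⁻¹ * (a * (P * Q))) :=
            (mul_inv_cancel_left₀ hC3pos.ne' _).symm
        _ ≤ C₀ ^ 3 * (a * G) := mul_le_mul_of_nonneg_left hsum_low hC3pos.le
        _ = a * (C₀ ^ 3 * G) := by ring
    exact le_of_mul_le_mul_left h4 hapos
  set b : ℝ := (ν n (cyl J)).toReal with hbdef
  set c : ℝ := (μ (cyl (Fin.append I J))).toReal with hcdef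
  have hab : (0 : ℝ) ≤ a * b := mul_nonneg hapos.le hbpos.le
  constructor
  · have h5 : ((C₀ ^ 6)⁻¹ * (a * b)) * G ≤ c * G := by
      calc ((C₀ ^ 6)⁻¹ * (a * b)) * G
          = (C₀ ^ 3)⁻¹ * (a * b * ((C₀ ^ 3)⁻¹ * G)) := by ring
        _ ≤ (C₀ ^ 3)⁻¹ * (a * b * (P * Q)) := by
            apply mul_le_mul_of_nonneg_left _ (inv_pos.mpr hC3pos).le
            apply mul_le_mul_of_nonneg_left _ hab
            calc (C₀ ^ 3)⁻¹ * G ≤ (C₀ ^ 3)⁻¹ * (C₀ ^ 3 * (P * Q)) :=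
                  mul_le_mul_of_nonneg_left hG_le (inv_pos.mpr hC3pos).le
              _ = P * Q := inv_mul_cancel_left₀ hC3pos.ne' _
        _ ≤ c * G := hklow
    exact le_of_mul_le_mul_right h5 hGpos
  · have h5 : c * G ≤ (C₀ ^ 6 * (a * b)) * G := by
      calc c * G ≤ C₀ ^ 3 * (a * b * (P * Q)) := hkup
        _ ≤ C₀ ^ 3 * (a * b * (C₀ ^ 3 * G)) :=
            mul_le_mul_of_nonneg_left (mul_le_mul_of_nonneg_left hPQ_le hab) hC3pos.le
        _ = (C₀ ^ 6 * (a * b)) * G := by ring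
    exact le_of_mul_le_mul_right h5 hGpos
end
end
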